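/- Fix a unit quaternion h and define, for x in the unit quaternions S³, p(x) = −h i x i x⁻¹ h⁻¹, α₂(x) = −2 h x j x⁻¹ h⁻¹ and α₃(x) = −2 h x k x⁻¹ h⁻¹. Then p(x) is a unit quaternion for every x, and the directional derivatives of p at x in the directions xi, xj, xk are respectively: X₁(p) = 0, X₂(p) = p(x) · α₂(x), X₃(p) = p(x) · α₃(x). In particular p has nowhere maximal rank and p(S³) is contained in a totally geodesic 2-sphere of S³. -/

import Mathlib

noncomputable section

open Quaternion

/-- The imaginary quaternion unit `i`. -/
def qi : ℍ[ℝ] := ⟨0, 1, 0, 0⟩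

/-- The imaginary quaternion unit `j`. -/
def qj : ℍ[ℝ] := ⟨0, 0, 1, 0⟩

/-- The imaginary quaternion unit `k`. -/
def qk : ℍ[ℝ] := ⟨0, 0, 0, 1⟩

/-- Euclidean inner product on the quaternions: `⟨x,y⟩ = Re (x * star y)`. -/
def ipQ (x y : ℍ[ℝ]) : ℝ := (x * star y).re

/-- Cross product of (imaginary) quaternions: `α × β = ½(αβ − βα)`. -/
def crossQ (a b : ℍ[ℝ]) : ℍ[ℝ] := (1 / 2 : ℝ) • (a * b - b * a)

lemma qi_qi : qi * qi = -1 := by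
  ext <;> simp [Quaternion.re_mul, Quaternion.imI_mul, Quaternion.imJ_mul, Quaternion.imK_mul] <;> simp [qi]
lemma qi_qj : qi * qj = qk := by
  ext <;> simp [Quaternion.re_mul, Quaternion.imI_mul, Quaternion.imJ_mul, Quaternion.imK_mul] <;> simp [qi, qj, qk]
lemma qj_qi : qj * qi = -qk := by
  ext <;> simp [Quaternion.re_mul, Quaternion.imI_mul, Quaternion.imJ_mul, Quaternion.imK_mul] <;> simp [qi, qj, qk]
lemma qi_qk : qi * qk = -qj := by
  ext <;> simp [Quaternion.re_mul, Quaternion.imI_mul, Quaternion.imJ_mul, Quaternion.imK_mul] <;> simp [qi, qj, qk]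
lemma qk_qi : qk * qi = qj := by
  ext <;> simp [Quaternion.re_mul, Quaternion.imI_mul, Quaternion.imJ_mul, Quaternion.imK_mul] <;> simp [qi, qj, qk]

lemma qi_qi' (z : ℍ[ℝ]) : qi * (qi * z) = -z := by rw [← mul_assoc, qi_qi]; simp
lemma qi_qj' (z : ℍ[ℝ]) : qi * (qj * z) = qk * z := by rw [← mul_assoc, qi_qj]
lemma qj_qi' (z : ℍ[ℝ]) : qj * (qi * z) = -(qk * z) := by rw [← mul_assoc, qj_qi]; simp
lemma qi_qk' (z : ℍ[ℝ]) : qi * (qk * z) = -(qj * z) := by rw [← mul_assoc, qi_qk]; simp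
lemma qk_qi' (z : ℍ[ℝ]) : qk * (qi * z) = qj * z := by rw [← mul_assoc, qk_qi]

lemma norm_qi : ‖qi‖ = 1 := by
  have h1 : Quaternion.normSq qi = 1 := by rw [Quaternion.normSq_def']; simp [qi]
  have h2 := Quaternion.normSq_eq_norm_mul_self qi
  nlinarith [norm_nonneg qi]

lemma re_mul_comm (a b : ℍ[ℝ]) : (a * b).re = (b * a).re := by
  simp [Quaternion.re_mul]; ring

lemma re_sandwich (h z : ℍ[ℝ]) (hh : star h * h = 1) : (h * z * star h).re = z.re := by
  rw [re_mul_comm, ← mul_assoc, hh, one_mul]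

lemma re_key (y : ℍ[ℝ]) : (qi * y * qi * star y * qi).re = 0 := by
  simp [Quaternion.re_mul, Quaternion.imI_mul, Quaternion.imJ_mul, Quaternion.imK_mul]
  simp [qi]
  ring

/-- the map `p(x) = −hixix⁻¹h⁻¹` takes values in `S³`, satisfies
`X₁(p) = 0`, `X₂(p) = pα₂`, `X₃(p) = pα₃` (so `p` has nowhere maximal rank), and its
image `p(S³)` is contained in a totally geodesic 2-sphere of `S³` (a great 2-sphere
`{z ∈ S³ : ⟨z, a⟩ = 0}`). -/
theorem stmt16 (h : ℍ[ℝ]) (hh : ‖h‖ = 1)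
    (p α₂ α₃ : ℍ[ℝ] → ℍ[ℝ])
    (hp : p = fun x => -(h * qi * x * qi * x⁻¹ * h⁻¹))
    (hα₂ : α₂ = fun x => -((2 : ℝ) • (h * x * qj * x⁻¹ * h⁻¹)))
    (hα₃ : α₃ = fun x => -((2 : ℝ) • (h * x * qk * x⁻¹ * h⁻¹)))
    (x : ℍ[ℝ]) (hx : ‖x‖ = 1) :
    ‖p x‖ = 1 ∧
    fderiv ℝ p x (x * qi) = 0 ∧
    fderiv ℝ p x (x * qj) = p x * α₂ x ∧
    fderiv ℝ p x (x * qk) = p x * α₃ x ∧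
    ∃ a : ℍ[ℝ], a ≠ 0 ∧ ∀ y : ℍ[ℝ], ‖y‖ = 1 → ipQ (p y) a = 0 := by
  have hx0 : x ≠ 0 := by intro e; rw [e] at hx; simp at hx
  have hh0 : h ≠ 0 := by intro e; rw [e] at hh; simp at hh
  have hqi0 : qi ≠ 0 := by intro e; have := norm_qi; rw [e] at this; simp at this
  -- rewrite p in a convenient associated form
  have hp' : p = fun y : ℍ[ℝ] => -((h * qi) * (y * qi * y⁻¹) * h⁻¹) := by
    rw [hp]; funext y; noncomm_ring
  -- derivative formula
  have key : ∀ w, fderiv ℝ p x w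
      = -((h*qi) * (w * qi * x⁻¹ + x * qi * (-(x⁻¹ * w * x⁻¹))) * h⁻¹) := by
    intro w
    rw [hp']
    have d1 : HasFDerivAt (fun y : ℍ[ℝ] => y * qi)
        ((ContinuousLinearMap.id ℝ ℍ[ℝ]).smulRight qi) x := by
      simpa using (hasFDerivAt_id x).smul_const qi
    have d2 := (hasFDerivAt_inv' (𝕜 := ℝ) hx0)
    have d4 := (((d1.mul' d2).const_mul (h*qi)).mul_const' h⁻¹).neg
    rw [(d4.congr_of_eventuallyEq (f₁ := fun y : ℍ[ℝ] => -((h * qi) * (y * qi * y⁻¹) * h⁻¹)) (Filter.Eventually.of_forall fun y => by simp [Pi.mul_apply])).fderiv]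
    simp [ContinuousLinearMap.smulRight_apply, ContinuousLinearMap.mulLeftRight_apply,
      mul_smul_comm, smul_mul_assoc]
    noncomm_ring
  refine ⟨?_, ?_, ?_, ?_, ?_⟩
  · rw [hp]
    simp [norm_mul, norm_inv, hx, hh, norm_qi]
  · rw [key]
    simp [mul_assoc, inv_mul_cancel_left₀ hx0, mul_inv_cancel_left₀ hx0,
      qi_qi', qi_qj', qj_qi', qi_qk', qk_qi', mul_add, mul_neg, neg_mul,
      mul_inv_cancel₀ hx0]
  · rw [key, hp, hα₂]
    simp only [mul_assoc, mul_add, mul_neg, neg_mul, neg_neg, mul_smul_comm, smul_mul_assoc,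
      inv_mul_cancel_left₀ hx0, mul_inv_cancel_left₀ hx0,
      inv_mul_cancel_left₀ hh0, mul_inv_cancel_left₀ hh0,
      qi_qi', qi_qj', qj_qi', qi_qk', qk_qi', two_smul]
    simp only [add_mul, neg_mul, mul_assoc]
  · rw [key, hp, hα₃]
    simp only [mul_assoc, mul_add, mul_neg, neg_mul, neg_neg, mul_smul_comm, smul_mul_assoc,
      inv_mul_cancel_left₀ hx0, mul_inv_cancel_left₀ hx0,
      inv_mul_cancel_left₀ hh0, mul_inv_cancel_left₀ hh0,
      qi_qi', qi_qj', qj_qi', qi_qk', qk_qi', two_smul]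
    simp only [add_mul, neg_mul, mul_assoc]
  · refine ⟨h * qi * star h, ?_, ?_⟩
    · exact mul_ne_zero (mul_ne_zero hh0 hqi0) (star_ne_zero.mpr hh0)
    · intro y hy
      have hy0 : y ≠ 0 := by intro e; rw [e] at hy; simp at hy
      have hns : Quaternion.normSq y = 1 := by
        rw [Quaternion.normSq_eq_norm_mul_self, hy]; ring
      have hnh : Quaternion.normSq h = 1 := by
        rw [Quaternion.normSq_eq_norm_mul_self, hh]; ring
      have hyi : y⁻¹ = star y := by
        rw [Quaternion.inv_def, hns]; simp
      have hhi : h⁻¹ = star h := by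
        rw [Quaternion.inv_def, hnh]; simp
      have hsh : star h * h = 1 := by
        rw [star_mul_self, hnh]; simp
      have hsh' : ∀ z : ℍ[ℝ], star h * (h * z) = z := by
        intro z; rw [← mul_assoc, hsh, one_mul]
      have hsqi : star qi = -qi := by ext <;> simp <;> simp [qi]
      have e1 : p y * star (h * qi * star h)
          = h * (qi * y * qi * star y * qi) * star h := by
        rw [hp]
        simp only [hyi, hhi, star_mul, star_star, hsqi]
        simp only [neg_mul, mul_neg, neg_neg, mul_assoc, hsh']
      rw [ipQ, e1, re_sandwich _ _ hsh, re_key]
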